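/- The binomial moments can be expressed via iterated differences of the Laplace exponent: Φ(n:m) = C(n,m) ∑_{j=0}^m (−1)^{j+1} C(m,j) Φ(n−m+j) for all 1 ≤ m ≤ n, where Φ(ρ) = ρd + ∫_0^1 (1−(1−x)^ρ)ν(dx) and Φ(n:m) = C(n,m)∫_0^1 x^m (1−x)^{n−m} ν(dx) + 1(m=1)·n·d. -/

import Mathlib

open MeasureTheory Finset

lemma alt_sum_choose_real (m : ℕ) :
    ∑ j ∈ Finset.range (m + 1), (-1 : ℝ) ^ j * (m.choose j : ℝ)
      = if m = 0 then 1 else 0 := by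
  have h := Int.alternating_sum_range_choose (n := m)
  have h2 : ((∑ i ∈ Finset.range (m + 1), (-1 : ℤ) ^ i * (m.choose i : ℤ) : ℤ) : ℝ)
      = ∑ j ∈ Finset.range (m + 1), (-1 : ℝ) ^ j * (m.choose j : ℝ) := by
    push_cast; rfl
  rw [← h2, h]
  split_ifs <;> simp

lemma sumJ (m' : ℕ) :
    ∑ j ∈ Finset.range (m' + 1 + 1),
        (-1 : ℝ) ^ (j + 1) * ((m' + 1).choose j : ℝ) * (j : ℝ)
      = if m' + 1 = 1 then 1 else 0 := by
  rw [Finset.sum_range_succ']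
  have hterm : ∀ i, (-1 : ℝ) ^ (i + 1 + 1) * ((m' + 1).choose (i + 1) : ℝ) * ((i + 1 : ℕ) : ℝ)
      = ((m' : ℝ) + 1) * ((-1 : ℝ) ^ i * (m'.choose i : ℝ)) := by
    intro i
    have hn : (m' + 1) * m'.choose i = (m' + 1).choose (i + 1) * (i + 1) :=
      Nat.add_one_mul_choose_eq m' i
    have hc : ((m' : ℝ) + 1) * (m'.choose i : ℝ)
        = ((m' + 1).choose (i + 1) : ℝ) * ((i : ℝ) + 1) := by
      exact_mod_cast congrArg (Nat.cast : ℕ → ℝ) hn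
    push_cast
    calc (-1 : ℝ) ^ (i + 1 + 1) * ((m' + 1).choose (i + 1) : ℝ) * ((i : ℝ) + 1)
        = (-1 : ℝ) ^ i * (((m' + 1).choose (i + 1) : ℝ) * ((i : ℝ) + 1)) := by
          rw [pow_succ, pow_succ]; ring
      _ = (-1 : ℝ) ^ i * (((m' : ℝ) + 1) * (m'.choose i : ℝ)) := by rw [← hc]
      _ = ((m' : ℝ) + 1) * ((-1 : ℝ) ^ i * (m'.choose i : ℝ)) := by ring
  simp only [Nat.cast_zero, mul_zero, add_zero]
  rw [Finset.sum_congr rfl (fun i _ => hterm i), ← Finset.mul_sum, alt_sum_choose_real]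
  by_cases h : m' = 0 <;> simp [h]

lemma sumA (m : ℕ) (hm : 1 ≤ m) (c : ℝ) :
    ∑ j ∈ Finset.range (m + 1), (-1 : ℝ) ^ (j + 1) * (m.choose j : ℝ) * (c + (j : ℝ))
      = if m = 1 then 1 else 0 := by
  obtain ⟨m', rfl⟩ := Nat.exists_eq_add_of_le hm
  have hsplit : ∀ j, (-1 : ℝ) ^ (j + 1) * ((1 + m').choose j : ℝ) * (c + (j : ℝ))
      = (-c) * ((-1 : ℝ) ^ j * ((1 + m').choose j : ℝ))
        + (-1 : ℝ) ^ (j + 1) * ((1 + m').choose j : ℝ) * (j : ℝ) := by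
    intro j; rw [pow_succ]; ring
  rw [Finset.sum_congr rfl (fun j _ => hsplit j), Finset.sum_add_distrib, ← Finset.mul_sum,
    alt_sum_choose_real]
  have h1 : 1 + m' = m' + 1 := by omega
  rw [h1]
  rw [sumJ m']
  simp

lemma one_sub_pow_integrable (ν : Measure ℝ)
    (hint : IntegrableOn (fun x => x) (Set.Ioc 0 1) ν) (k : ℕ) :
    IntegrableOn (fun x => 1 - (1 - x) ^ k) (Set.Ioc (0:ℝ) 1) ν := by
  apply Integrable.mono (hint.const_mul (k : ℝ))
  · exact (Continuous.aestronglyMeasurable (by continuity))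
  · rw [ae_restrict_iff' measurableSet_Ioc]
    refine Filter.Eventually.of_forall (fun x hx => ?_)
    obtain ⟨hx0, hx1⟩ := hx
    have ht0 : (0 : ℝ) ≤ 1 - x := by linarith
    have ht1 : 1 - x ≤ 1 := by linarith
    have hle : (1 - x) ^ k ≤ 1 := pow_le_one₀ ht0 ht1
    have hfact : 1 - (1 - x) ^ k = x * ∑ i ∈ Finset.range k, (1 - x) ^ i := by
      have := mul_neg_geom_sum (1 - x) k
      calc 1 - (1 - x) ^ k = (1 - (1 - x)) * ∑ i ∈ Finset.range k, (1 - x) ^ i := this.symm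
        _ = x * ∑ i ∈ Finset.range k, (1 - x) ^ i := by ring_nf
    have hsum : ∑ i ∈ Finset.range k, (1 - x) ^ i ≤ (k : ℝ) := by
      calc ∑ i ∈ Finset.range k, (1 - x) ^ i ≤ ∑ i ∈ Finset.range k, (1 : ℝ) :=
            Finset.sum_le_sum (fun i _ => pow_le_one₀ ht0 ht1)
        _ = (k : ℝ) := by simp
    have hnn : 0 ≤ 1 - (1 - x) ^ k := by linarith
    rw [Real.norm_eq_abs, Real.norm_eq_abs, abs_of_nonneg hnn]
    have hb : 1 - (1 - x) ^ k ≤ (k : ℝ) * x := by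
      rw [hfact]
      calc x * ∑ i ∈ Finset.range k, (1 - x) ^ i ≤ x * (k : ℝ) :=
            mul_le_mul_of_nonneg_left hsum (le_of_lt hx0)
        _ = (k : ℝ) * x := mul_comm _ _
    calc 1 - (1 - x) ^ k ≤ (k : ℝ) * x := hb
      _ ≤ |(k : ℝ) * x| := le_abs_self _

lemma pointwise_sum (m k : ℕ) (hm : 1 ≤ m) (x : ℝ) :
    ∑ j ∈ Finset.range (m + 1),
        (-1 : ℝ) ^ (j + 1) * (m.choose j : ℝ) * (1 - (1 - x) ^ (k + j))
      = x ^ m * (1 - x) ^ k := by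
  have hsplit : ∀ j, (-1 : ℝ) ^ (j + 1) * (m.choose j : ℝ) * (1 - (1 - x) ^ (k + j))
      = (-1) * ((-1 : ℝ) ^ j * (m.choose j : ℝ))
        + (1 - x) ^ k * ((-(1 - x)) ^ j * 1 ^ (m - j) * (m.choose j : ℝ)) := by
    intro j
    rw [pow_add (1 - x) k j, pow_succ, show (-(1 - x)) = (-1) * (1 - x) from by ring, mul_pow]
    ring
  rw [Finset.sum_congr rfl (fun j _ => hsplit j), Finset.sum_add_distrib, ← Finset.mul_sum,
    ← Finset.mul_sum, alt_sum_choose_real, ← add_pow (-(1 - x)) 1 m]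
  have hm0 : m ≠ 0 := by omega
  rw [if_neg hm0]
  have : -(1 - x) + 1 = x := by ring
  rw [this]
  ring

/-- Binomial moment `Φ(n:m) = C(n,m) ∫ x^m (1-x)^(n-m) ν(dx) + 1(m=1) n d`. -/
noncomputable def binomialMoment (ν : Measure ℝ) (d : ℝ) (n m : ℕ) : ℝ :=
  (n.choose m : ℝ) * (∫ x in Set.Ioc (0:ℝ) 1, x ^ m * (1 - x) ^ (n - m) ∂ν) +
    if m = 1 then (n : ℝ) * d else 0

/-- Laplace exponent `Φ(n) = n d + ∫ (1-(1-x)^n) ν(dx)` (so `Φ(0) = 0`). -/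
noncomputable def laplaceExponent (ν : Measure ℝ) (d : ℝ) (n : ℕ) : ℝ :=
  (n : ℝ) * d + ∫ x in Set.Ioc (0:ℝ) 1, (1 - (1 - x) ^ n) ∂ν

/-- The binomial moments are iterated differences of the Laplace exponent:
`Φ(n:m) = C(n,m) ∑_{j=0}^m (−1)^{j+1} C(m,j) Φ(n−m+j)` for `1 ≤ m ≤ n`. -/
theorem binomialMoment_eq_iteratedDifference (ν : Measure ℝ) (d : ℝ) (hd : 0 ≤ d)
    (hint : IntegrableOn (fun x => x) (Set.Ioc 0 1) ν)
    (n m : ℕ) (hm : 1 ≤ m) (hmn : m ≤ n) :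
    binomialMoment ν d n m =
      (n.choose m : ℝ) * ∑ j ∈ Finset.range (m + 1),
        (-1 : ℝ) ^ (j + 1) * (m.choose j : ℝ) * laplaceExponent ν d (n - m + j) := by
  set k := n - m with hk
  -- split Laplace exponent
  have hsplit : ∀ j ∈ Finset.range (m + 1),
      (-1 : ℝ) ^ (j + 1) * (m.choose j : ℝ) * laplaceExponent ν d (n - m + j)
      = (-1 : ℝ) ^ (j + 1) * (m.choose j : ℝ) * (((k : ℝ) + (j : ℝ)) * d)
        + (-1 : ℝ) ^ (j + 1) * (m.choose j : ℝ)
            * ∫ x in Set.Ioc (0:ℝ) 1, (1 - (1 - x) ^ (k + j)) ∂ν := by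
    intro j _
    rw [laplaceExponent, ← hk]
    push_cast
    ring
  rw [Finset.sum_congr rfl hsplit, Finset.sum_add_distrib]
  -- drift part
  have hdrift : ∑ j ∈ Finset.range (m + 1),
      (-1 : ℝ) ^ (j + 1) * (m.choose j : ℝ) * (((k : ℝ) + (j : ℝ)) * d)
      = (if m = 1 then 1 else 0) * d := by
    have h1 : ∀ j, (-1 : ℝ) ^ (j + 1) * (m.choose j : ℝ) * (((k : ℝ) + (j : ℝ)) * d)
        = ((-1 : ℝ) ^ (j + 1) * (m.choose j : ℝ) * ((k : ℝ) + (j : ℝ))) * d := by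
      intro j; ring
    rw [Finset.sum_congr rfl (fun j _ => h1 j), ← Finset.sum_mul, sumA m hm]
  rw [hdrift]
  -- integral part
  have hintpart : ∑ j ∈ Finset.range (m + 1),
      (-1 : ℝ) ^ (j + 1) * (m.choose j : ℝ)
        * ∫ x in Set.Ioc (0:ℝ) 1, (1 - (1 - x) ^ (k + j)) ∂ν
      = ∫ x in Set.Ioc (0:ℝ) 1, x ^ m * (1 - x) ^ k ∂ν := by
    have hI : ∀ j ∈ Finset.range (m + 1),
        Integrable (fun x => (-1 : ℝ) ^ (j + 1) * (m.choose j : ℝ) * (1 - (1 - x) ^ (k + j)))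
          (ν.restrict (Set.Ioc 0 1)) := by
      intro j _
      exact (one_sub_pow_integrable ν hint (k + j)).const_mul _
    have h2 : ∀ j ∈ Finset.range (m + 1),
        (-1 : ℝ) ^ (j + 1) * (m.choose j : ℝ)
          * ∫ x in Set.Ioc (0:ℝ) 1, (1 - (1 - x) ^ (k + j)) ∂ν
        = ∫ x in Set.Ioc (0:ℝ) 1,
            (-1 : ℝ) ^ (j + 1) * (m.choose j : ℝ) * (1 - (1 - x) ^ (k + j)) ∂ν := by
      intro j _
      rw [← MeasureTheory.integral_const_mul]
    rw [Finset.sum_congr rfl h2, ← MeasureTheory.integral_finset_sum _ hI]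
    apply MeasureTheory.integral_congr_ae
    refine Filter.Eventually.of_forall (fun x => ?_)
    exact pointwise_sum m k hm x
  rw [hintpart, binomialMoment, ← hk, mul_add]
  by_cases h1 : m = 1
  · subst h1
    simp only [if_pos rfl, Nat.choose_one_right, if_true]
    ring
  · simp only [if_neg h1, mul_zero, add_zero, zero_add]
    ring
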